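/- Every crossed module of Lie algebras (∂ : m → n, D : n → Der(m)) gives rise to a category internal to Lie algebras (a strict Lie 2-algebra): objects n, morphisms the semidirect product m ⋊ n with bracket [(x₁, y₁), (x₂, y₂)] = ([x₁, x₂] + D(y₁)x₂ − D(y₂)x₁, [y₁, y₂]), source s(x,y) = y, target t(x,y) = ∂x + y, identity 1_y = (0, y), and composition (x₁, ∂x₂ + y₂)∘(x₂, y₂) = (x₁ + x₂, y₂); all structure maps are Lie algebra homomorphisms and the category axioms (associativity, unitality of composition, compatibility of source/target) hold. -/

import Mathlib

/-- Every crossed module of Lie algebras gives rise to a category internal to Lie algebras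
    (a strict Lie 2-algebra): objects `n`, morphisms the semidirect product `m ⋊ n`,
    source `s(x,y) = y`, target `t(x,y) = ∂ x + y`, unit `1_y = (0,y)` and composition
    `(x₁, ∂ x₂ + y₂) ∘ (x₂, y₂) = (x₁ + x₂, y₂)`; all structure maps are Lie algebra
    homomorphisms and the category axioms hold. -/
theorem stmt_7 {m n : Type*} [LieRing m] [LieAlgebra ℝ m] [LieRing n] [LieAlgebra ℝ n]
    (del : m →ₗ⁅ℝ⁆ n) (D : n →ₗ⁅ℝ⁆ LieDerivation ℝ m m)
    (hcm1 : ∀ (y : n) (x : m), del (D y x) = ⁅y, del x⁆)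
    (hcm2 : ∀ x x' : m, D (del x) x' = ⁅x, x'⁆) :
    let br : m × n → m × n → m × n := fun p q =>
      (⁅p.1, q.1⁆ + D p.2 q.1 - D q.2 p.1, ⁅p.2, q.2⁆)
    let src : m × n → n := fun p => p.2
    let tgt : m × n → n := fun p => del p.1 + p.2
    let un : n → m × n := fun y => (0, y)
    let comp : m × n → m × n → m × n := fun p q => (p.1 + q.1, q.2)
    -- the structure maps are Lie algebra homomorphisms
    (∀ p q : m × n, src (br p q) = ⁅src p, src q⁆) ∧
    (∀ p q : m × n, tgt (br p q) = ⁅tgt p, tgt q⁆) ∧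
    (∀ y y' : n, un ⁅y, y'⁆ = br (un y) (un y')) ∧
    (∀ p q p' q' : m × n, src p = tgt q → src p' = tgt q' →
      src (br p p') = tgt (br q q') ∧
      comp (br p p') (br q q') = br (comp p q) (comp p' q')) ∧
    -- compatibility of source and target with units and composition
    (∀ y : n, src (un y) = y) ∧
    (∀ y : n, tgt (un y) = y) ∧
    (∀ p q : m × n, src p = tgt q → src (comp p q) = src q ∧ tgt (comp p q) = tgt p) ∧
    -- associativity
    (∀ p q r : m × n, src p = tgt q → src q = tgt r →
      comp (comp p q) r = comp p (comp q r)) ∧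
    -- unitality
    (∀ p : m × n, comp p (un (src p)) = p) ∧
    (∀ p : m × n, comp (un (tgt p)) p = p) := by
  intro br src tgt un comp
  refine ⟨fun p q => rfl, ?_, ?_, ?_, fun y => rfl, ?_, ?_, ?_, ?_, ?_⟩
  · intro p q
    simp only [br, tgt, map_add, map_sub, LieHom.map_lie, hcm1, map_smul, map_neg,
      lie_add, add_lie, sub_eq_add_neg, lie_skew, neg_one_smul, neg_lie, lie_neg, neg_neg]
    abel
  · intro y y'
    simp [br, un]
  · intro p q p' q' hp hp'
    simp only [src, tgt, br, comp] at *
    constructor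
    · simp only [hp, hp', hcm1, map_add, map_sub, LieHom.map_lie, map_smul, map_neg,
        lie_add, add_lie, sub_eq_add_neg, lie_skew, neg_one_smul, neg_lie, lie_neg, neg_neg]
      abel
    · refine Prod.ext ?_ rfl
      simp only [hp, hp', map_add, hcm2, LieDerivation.coe_add, Pi.add_apply,
        lie_add, add_lie, map_add]
      rw [show ⁅p.1, q'.1⁆ = -⁅q'.1, p.1⁆ from (lie_skew _ _).symm]
      abel
  · intro y; simp [tgt, un]
  · intro p q h
    simp only [src, tgt, comp] at h
    exact ⟨rfl, by show del (p.1 + q.1) + q.2 = del p.1 + p.2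
                   rw [h, map_add, add_assoc]⟩
  · intro p q r _ _; simp [comp, add_assoc]
  · intro p; simp [comp, un, src]
  · intro p; simp [comp, un, tgt]
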